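/- arXiv:2503.06758 — 7 statements merged into one kernel-verified Lean document; each statement's English description precedes it below -/
import Mathlib

section
/- There exists a strongly increasing sequence of length ω₁ consisting of functions from ω to ω. -/
open Ordinal Cardinal

/-- `f <ₙ g` : `f m < g m` for all `m ∈ ω \ n`. -/
def LtN (n : ℕ) (f g : ℕ → Ordinal) : Prop := ∀ m : ℕ, n ≤ m → f m < g m

/-- `f ≤ₙ g` : `f m ≤ g m` for all `m ∈ ω \ n`. -/
def LeN (n : ℕ) (f g : ℕ → Ordinal) : Prop := ∀ m : ℕ, n ≤ m → f m ≤ g m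

/-- `f <* g` : `f m < g m` for all but finitely many `m`. -/
def LtStar (f g : ℕ → Ordinal) : Prop := ∃ n : ℕ, LtN n f g

/-- `f =* g` : `f m = g m` for all but finitely many `m`. -/
def EqStar (f g : ℕ → Ordinal) : Prop := ∃ n : ℕ, ∀ m : ℕ, n ≤ m → f m = g m

/-- `C` is a club (closed unbounded) subset of the (limit) ordinal `β`:
`C ⊆ β`, `C` is closed in `β`, and `C` is unbounded in `β`. -/
def IsClubIn (C : Set Ordinal) (β : Ordinal) : Prop :=
  C ⊆ Set.Iio β ∧
  (∀ α < β, α ≠ 0 → (∀ δ < α, ∃ x ∈ C, δ < x ∧ x < α) → α ∈ C) ∧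
  (∀ δ < β, ∃ x ∈ C, δ < x)

/-- `S` is a stationary subset of `lam`: it meets every club subset of `lam`. -/
def StationaryIn (S : Set Ordinal) (lam : Ordinal) : Prop :=
  ∀ C : Set Ordinal, IsClubIn C lam → (S ∩ C).Nonempty

/-- `⟨f α : α < γ⟩` is a strongly increasing sequence of functions from `ω` to the
ordinals. -/
def StronglyIncreasingOn (f : Ordinal → ℕ → Ordinal) (γ : Ordinal) : Prop :=
  (∀ α β : Ordinal, α < β → β < γ → LtStar (f α) (f β)) ∧
  (∀ β < γ, Order.IsSuccLimit β →
    ∃ C : Set Ordinal, ∃ n : ℕ, IsClubIn C β ∧ ∀ α ∈ C, LtN n (f α) (f β))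

/-- `⟨f α : α < γ⟩` is a very strongly increasing sequence: it is strongly increasing,
the witnessing `n_β` can be taken to be `0` at limits of uncountable cofinality, and
condition (2) of Definition 1.2 holds at ordinals of the form `β + ω`. -/
def VeryStronglyIncreasingOn (f : Ordinal → ℕ → Ordinal) (γ : Ordinal) : Prop :=
  StronglyIncreasingOn f γ ∧
  (∀ β < γ, Order.IsSuccLimit β → Cardinal.aleph0 < β.cof →
    ∃ C : Set Ordinal, IsClubIn C β ∧ ∀ α ∈ C, LtN 0 (f α) (f β)) ∧
  (∀ β : Ordinal, β + Ordinal.omega0 < γ → ∀ n : ℕ,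
    ∃ α : Ordinal, β + 1 ≤ α ∧ α < β + Ordinal.omega0 ∧
      LeN n (f α) (f (β + Ordinal.omega0)) ∧ ∀ m : ℕ, m < n → f α m = 0)

/-- `g` is an exact upper bound for `⟨f α : α < γ⟩`. -/
def IsEUB (f : Ordinal → ℕ → Ordinal) (γ : Ordinal) (g : ℕ → Ordinal) : Prop :=
  (∀ α < γ, LtStar (f α) g) ∧
  (∀ h : ℕ → Ordinal, LtStar h g → ∃ α < γ, LtStar h (f α))

/-- `β` is good for `⟨f α : α < γ⟩` (only the restriction `f ↾ β` matters). -/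
def IsGoodFor (f : Ordinal → ℕ → Ordinal) (β : Ordinal) : Prop :=
  Cardinal.aleph0 < β.cof ∧
  ∃ h : ℕ → Ordinal, IsEUB f β h ∧ ∃ n : ℕ, ∀ i : ℕ, n ≤ i → (h i).cof = β.cof

/-- The Chang's Conjecture principle `(κ, lam) ↠ (δ, γ)`: every structure over a
countable first-order language with universe of cardinality `κ`, together with a subset
`B` of the universe of cardinality `lam`, admits an elementary substructure `X` of
cardinality `δ` with `|X ∩ B| = γ`. -/
def ChangsConjecture (κ lam δ γ : Cardinal) : Prop :=
  ∀ (L : FirstOrder.Language.{0, 0}) (M : Type) (_ : L.Structure M),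
    L.card ≤ Cardinal.aleph0 → Cardinal.mk M = κ →
    ∀ B : Set M, Cardinal.mk B = lam →
      ∃ X : L.ElementarySubstructure M,
        Cardinal.mk X = δ ∧ Cardinal.mk ((X : Set M) ∩ B : Set M) = γ

namespace Statement1Proof
open scoped Classical
universe u


lemma add_nat_lt' {β δ : Ordinal.{u}} (hl : Order.IsSuccLimit β) (hδ : δ < β) (k : ℕ) : δ + k < β := by
  induction k with
  | zero => simpa using hδ
  | succ n ih =>
      have h : δ + ((n+1 : ℕ) : Ordinal) = (δ + n) + 1 := by push_cast; rw [add_assoc]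
      rw [h, add_one_eq_succ]
      exact hl.succ_lt ih

def CofP (β : Ordinal.{u}) : Prop :=
  ∃ e : ℕ → Ordinal.{u}, (∀ k, e k < β) ∧ ∀ δ < β, ∃ k, δ < e k

noncomputable def cofSeq (β : Ordinal.{u}) : ℕ → Ordinal :=
  if h : CofP β then h.choose else fun _ => 0

lemma cofSeq_lt {β : Ordinal.{u}} (h0 : 0 < β) (k : ℕ) : cofSeq β k < β := by
  unfold cofSeq
  split
  · next h => exact h.choose_spec.1 k
  · exact h0

lemma cofP {β : Ordinal.{u}} (hβ : β < (Cardinal.aleph 1).ord) (hl : Order.IsSuccLimit β) : CofP β := by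
  have hc : (Set.Iio β).Countable := by
    rw [Cardinal.countable_iff_lt_aleph_one, Ordinal.mk_Iio_ordinal]
    exact Cardinal.lift_lt_aleph_one.mpr (Cardinal.lt_ord.1 hβ)
  obtain ⟨e, he⟩ := hc.exists_eq_range ⟨0, Set.mem_Iio.2 hl.pos⟩
  have hmem : ∀ k, e k ∈ Set.Iio β := fun k => he ▸ Set.mem_range_self k
  refine ⟨e, fun k => Set.mem_Iio.1 (hmem k), fun δ hδ => ?_⟩
  have h1 : δ + 1 ∈ Set.range e := by
    rw [← he]
    exact Set.mem_Iio.2 (by rw [add_one_eq_succ]; exact hl.succ_lt hδ)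
  obtain ⟨k, hk⟩ := h1
  refine ⟨k, ?_⟩
  rw [hk, add_one_eq_succ]
  exact Order.lt_succ δ

lemma cofSeq_cofinal {β : Ordinal.{u}} (hβ : β < (Cardinal.aleph 1).ord) (hl : Order.IsSuccLimit β) :
    ∀ δ < β, ∃ k, δ < cofSeq β k := by
  unfold cofSeq
  rw [dif_pos (cofP hβ hl)]
  exact (cofP hβ hl).choose_spec.2

noncomputable def eta (β : Ordinal.{u}) (k : ℕ) : Ordinal := (Finset.range (k+1)).sup (cofSeq β)

lemma eta_lt {β : Ordinal.{u}} (hl : Order.IsSuccLimit β) (k : ℕ) : eta β k < β := by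
  refine Finset.sup_lt_iff ?_ |>.mpr fun j _ => cofSeq_lt hl.pos j
  rw [Ordinal.bot_eq_zero]; exact hl.pos

lemma eta_mono {β : Ordinal.{u}} : Monotone (eta β) := fun k k' h =>
  Finset.sup_mono (Finset.range_subset_range.2 (by omega))

noncomputable def gam (β : Ordinal.{u}) (k : ℕ) : Ordinal :=
  Ordinal.omega0 * (eta β k / Ordinal.omega0) + k

lemma gam_lt {β : Ordinal.{u}} (hl : Order.IsSuccLimit β) (k : ℕ) : gam β k < β :=
  add_nat_lt' hl (lt_of_le_of_lt (mul_div_le _ _) (eta_lt hl k)) k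

lemma base_lt {β : Ordinal.{u}} (h0 : β ≠ 0) (hl : ¬ Order.IsSuccLimit β) :
    Ordinal.omega0 * (β / Ordinal.omega0) < β := by
  have hr : β % Ordinal.omega0 ≠ 0 := by
    intro h
    exact hl (isSuccLimit_iff_omega0_dvd.mpr ⟨h0, dvd_of_mod_eq_zero h⟩)
  conv_rhs => rw [← div_add_mod β Ordinal.omega0]
  simpa using (add_lt_add_iff_left (Ordinal.omega0 * (β / Ordinal.omega0))).2
    (pos_iff_ne_zero.2 hr)

noncomputable def F (β : Ordinal.{u}) : ℕ → Ordinal :=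
  if h0 : β = 0 then fun _ => 0
  else if hl : Order.IsSuccLimit β then
    fun m => ((Finset.range (m+1)).sup fun k => F (gam β k) m) + 1
  else
    fun m => if (m : Ordinal) < β % Ordinal.omega0 then 0
      else F (Ordinal.omega0 * (β / Ordinal.omega0)) m + β % Ordinal.omega0
termination_by β
decreasing_by
  · exact gam_lt hl _
  · exact base_lt h0 hl

lemma F_zero (m : ℕ) : F 0 m = 0 := by rw [F]; simp

lemma F_limit {β : Ordinal.{u}} (hl : Order.IsSuccLimit β) (m : ℕ) :
    F β m = ((Finset.range (m+1)).sup fun k => F (gam β k) m) + 1 := by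
  rw [F]; rw [dif_neg hl.pos.ne', dif_pos hl]

lemma F_succ {β : Ordinal.{u}} (h0 : β ≠ 0) (hl : ¬ Order.IsSuccLimit β) (m : ℕ) :
    F β m = if (m : Ordinal) < β % Ordinal.omega0 then 0
      else F (Ordinal.omega0 * (β / Ordinal.omega0)) m + β % Ordinal.omega0 := by
  rw [F]; rw [dif_neg h0, dif_neg hl]

lemma F_flat (q : Ordinal.{u}) {k : ℕ} (hk : 1 ≤ k) (m : ℕ) :
    F (Ordinal.omega0 * q + k) m
      = if (m : Ordinal.{u}) < (k : Ordinal.{u}) then 0 else F (Ordinal.omega0 * q) m + k := by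
  have hkpos : (0:Ordinal) < (k : Ordinal) := by exact_mod_cast Nat.pos_of_ne_zero (by omega)
  have h0 : Ordinal.omega0 * q + (k:Ordinal) ≠ 0 :=
    (lt_of_lt_of_le hkpos le_add_self).ne'
  have hnl : ¬ Order.IsSuccLimit (Ordinal.omega0 * q + (k:Ordinal)) := by
    have hc : ((k:ℕ):Ordinal) = ((k-1:ℕ):Ordinal) + 1 := by norm_cast; omega
    rw [hc, ← add_assoc, add_one_eq_succ]
    exact Order.not_isSuccLimit_succ _
  have hmod : (Ordinal.omega0 * q + (k:Ordinal)) % Ordinal.omega0 = k := by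
    rw [mul_add_mod_self, mod_eq_of_lt (nat_lt_omega0 k)]
  have hdiv : Ordinal.omega0 * ((Ordinal.omega0 * q + (k:Ordinal)) / Ordinal.omega0)
      = Ordinal.omega0 * q := by
    rw [mul_add_div _ omega0_ne_zero, div_eq_zero_of_lt (nat_lt_omega0 k), add_zero]
  rw [F_succ h0 hnl, hmod, hdiv]

lemma F_lt_omega0 : ∀ β : Ordinal.{u}, ∀ m : ℕ, F β m < Ordinal.omega0 := by
  intro β
  induction β using Ordinal.induction with
  | h β IH =>
    intro m
    rcases eq_or_ne β 0 with rfl | h0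
    · rw [F_zero]; exact omega0_pos
    by_cases hl : Order.IsSuccLimit β
    · rw [F_limit hl]
      have hsup : ((Finset.range (m+1)).sup fun k => F (gam β k) m) < Ordinal.omega0 := by
        refine Finset.sup_lt_iff ?_ |>.mpr fun j _ => IH (gam β j) (gam_lt hl j) m
        rw [Ordinal.bot_eq_zero]; exact omega0_pos
      rw [add_one_eq_succ]
      exact isSuccLimit_omega0.succ_lt hsup
    · rw [F_succ h0 hl]
      split
      · exact omega0_pos
      · obtain ⟨a, ha⟩ := lt_omega0.1 (IH _ (base_lt h0 hl) m)
        obtain ⟨b, hb⟩ := lt_omega0.1 (mod_lt β omega0_ne_zero)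
        rw [ha, hb, ← Nat.cast_add]
        exact nat_lt_omega0 _

lemma gam_lt_F {β : Ordinal.{u}} (hl : Order.IsSuccLimit β) (k m : ℕ) : F (gam β k) m < F β m := by
  rw [F_limit hl]
  rcases le_or_gt k m with h | h
  · refine lt_of_le_of_lt (Finset.le_sup (f := fun k => F (gam β k) m)
      (Finset.mem_range.2 (Nat.lt_succ_of_le h))) ?_
    rw [add_one_eq_succ]
    exact Order.lt_succ _
  · have hk1 : 1 ≤ k := by omega
    have : F (gam β k) m = 0 := by
      rw [show gam β k = Ordinal.omega0 * (eta β k / Ordinal.omega0) + k from rfl,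
        F_flat _ hk1, if_pos (by exact_mod_cast h)]
    rw [this]
    exact lt_of_le_of_lt (zero_le (a := (_ : Ordinal.{u}))) (by rw [add_one_eq_succ]; exact Order.lt_succ _)

lemma gam_cofinal {β : Ordinal.{u}} (hβ : β < (Cardinal.aleph 1).ord) (hl : Order.IsSuccLimit β) :
    ∀ δ < β, ∃ k, δ < gam β k := by
  intro δ hδ
  obtain ⟨j, hj⟩ := cofSeq_cofinal hβ hl δ hδ
  obtain ⟨r, hr⟩ := lt_omega0.1 (mod_lt δ omega0_ne_zero)
  refine ⟨max j (r+1), ?_⟩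
  have h1 : δ < eta β (max j (r+1)) :=
    lt_of_lt_of_le hj (Finset.le_sup (f := cofSeq β) (Finset.mem_range.2 (Nat.lt_succ_of_le (le_max_left _ _))))
  have h2 : Ordinal.omega0 * (δ / Ordinal.omega0)
      ≤ Ordinal.omega0 * (eta β (max j (r+1)) / Ordinal.omega0) :=
    mul_le_mul_right (div_le_left h1.le _) _
  calc δ = Ordinal.omega0 * (δ / Ordinal.omega0) + δ % Ordinal.omega0 :=
        (div_add_mod δ Ordinal.omega0).symm
    _ < Ordinal.omega0 * (δ / Ordinal.omega0) + (max j (r+1) : ℕ) := by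
        rw [hr]
        exact add_lt_add_right (by exact_mod_cast (by omega : r < max j (r+1))) _
    _ ≤ gam β (max j (r+1)) := add_le_add_left h2 _

lemma F_mono : ∀ β : Ordinal.{u}, β < (Cardinal.aleph 1).ord →
    ∀ α, α < β → ∃ n : ℕ, ∀ m : ℕ, n ≤ m → F α m < F β m := by
  intro β
  induction β using Ordinal.induction with
  | h β IH =>
    intro hβ α hα
    by_cases hl : Order.IsSuccLimit β
    · obtain ⟨k, hk⟩ := gam_cofinal hβ hl α hα
      obtain ⟨n, hn⟩ := IH (gam β k) (gam_lt hl k) ((gam_lt hl k).trans hβ) α hk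
      exact ⟨n, fun m hm => (hn m hm).trans (gam_lt_F hl k m)⟩
    · have h0 : β ≠ 0 := by rintro rfl; simp at hα
      obtain ⟨k, hk⟩ := lt_omega0.1 (mod_lt β omega0_ne_zero)
      have hk1 : 1 ≤ k := by
        rcases Nat.eq_zero_or_pos k with h | h
        · exfalso
          apply hl
          refine isSuccLimit_iff_omega0_dvd.mpr ⟨h0, dvd_of_mod_eq_zero ?_⟩
          simp [hk, h]
        · omega
      have hβeq : β = Ordinal.omega0 * (β / Ordinal.omega0) + (k : Ordinal) := by
        conv_lhs => rw [← div_add_mod β Ordinal.omega0]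
        rw [hk]
      have hΛβ : Ordinal.omega0 * (β / Ordinal.omega0) < β := base_lt h0 hl
      rcases lt_or_ge α (Ordinal.omega0 * (β / Ordinal.omega0)) with hαΛ | hΛα
      · obtain ⟨n, hn⟩ := IH _ hΛβ (hΛβ.trans hβ) α hαΛ
        refine ⟨max n k, fun m hm => ?_⟩
        have h2 : F β m = F (Ordinal.omega0 * (β / Ordinal.omega0)) m + (k : Ordinal) := by
          conv_lhs => rw [hβeq]
          rw [F_flat _ hk1, if_neg (not_lt.2 (by exact_mod_cast (by omega : k ≤ m)))]
        rw [h2]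
        exact lt_of_lt_of_le (hn m (by omega)) (le_self_add)
      · have hα2 : α < Ordinal.omega0 * (β / Ordinal.omega0) + (k : Ordinal) := by
          rw [← hβeq]; exact hα
        have hαeq : α = Ordinal.omega0 * (β / Ordinal.omega0)
            + (α - Ordinal.omega0 * (β / Ordinal.omega0)) :=
          (Ordinal.add_sub_cancel_of_le hΛα).symm
        have hsub : α - Ordinal.omega0 * (β / Ordinal.omega0) < (k : Ordinal) := by
          rw [Ordinal.sub_lt_of_le hΛα]
          exact hα2
        obtain ⟨j, hj⟩ := lt_omega0.1 (hsub.trans (nat_lt_omega0 k))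
        have hjk : j < k := by
          rw [hj] at hsub
          exact_mod_cast hsub
        refine ⟨k, fun m hm => ?_⟩
        have h2 : F β m = F (Ordinal.omega0 * (β / Ordinal.omega0)) m + (k : Ordinal) := by
          conv_lhs => rw [hβeq]
          rw [F_flat _ hk1, if_neg (not_lt.2 (by exact_mod_cast hm))]
        rcases Nat.eq_zero_or_pos j with hj0 | hj0
        · have hαΛ' : α = Ordinal.omega0 * (β / Ordinal.omega0) := by
            rw [hαeq, hj, hj0, Nat.cast_zero, add_zero]
          rw [hαΛ', h2]
          have hkpos : (0:Ordinal) < (k : Ordinal) := by exact_mod_cast hk1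
          calc F (Ordinal.omega0 * (β / Ordinal.omega0)) m
              = F (Ordinal.omega0 * (β / Ordinal.omega0)) m + 0 := (add_zero _).symm
            _ < F (Ordinal.omega0 * (β / Ordinal.omega0)) m + (k : Ordinal) :=
                add_lt_add_right hkpos _
        · have hup : α = Ordinal.omega0 * (β / Ordinal.omega0) + (j : Ordinal) := by
            rw [hαeq, hj]
          have h3 : F α m = F (Ordinal.omega0 * (β / Ordinal.omega0)) m + (j : Ordinal) := by
            conv_lhs => rw [hup]
            rw [F_flat _ hj0, if_neg (not_lt.2 (by exact_mod_cast (by omega : j ≤ m)))]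
          rw [h2, h3]
          exact add_lt_add_right (by exact_mod_cast hjk) _

lemma gam_strictMono {β : Ordinal.{u}} (hl : Order.IsSuccLimit β) : StrictMono (gam β) := by
  apply strictMono_nat_of_lt_succ
  intro k
  have hq : eta β k / Ordinal.omega0 ≤ eta β (k+1) / Ordinal.omega0 :=
    div_le_left (eta_mono (Nat.le_succ k)) _
  rcases hq.lt_or_eq with h | h
  · calc gam β k
        < Ordinal.omega0 * (eta β k / Ordinal.omega0) + Ordinal.omega0 :=
          add_lt_add_right (nat_lt_omega0 k) _
      _ = Ordinal.omega0 * (eta β k / Ordinal.omega0 + 1) := by rw [mul_add, mul_one]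
      _ ≤ Ordinal.omega0 * (eta β (k+1) / Ordinal.omega0) :=
          mul_le_mul_right (by rw [add_one_eq_succ]; exact Order.succ_le_of_lt h) _
      _ ≤ gam β (k+1) := le_self_add
  · show Ordinal.omega0 * (eta β k / Ordinal.omega0) + (k : Ordinal) < gam β (k+1)
    unfold gam
    rw [h]
    exact add_lt_add_right (by exact_mod_cast Nat.lt_succ_self k) _


noncomputable def Fn (β : Ordinal.{u}) (m : ℕ) : ℕ :=
  (lt_omega0.1 (F_lt_omega0 β m)).choose

lemma Fn_spec (β : Ordinal.{u}) (m : ℕ) : F β m = ((Fn β m : ℕ) : Ordinal.{u}) :=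
  (lt_omega0.1 (F_lt_omega0 β m)).choose_spec

lemma Fn_mono {β : Ordinal.{u}} (hβ : β < (Cardinal.aleph 1).ord) {α : Ordinal.{u}}
    (hα : α < β) : ∃ n : ℕ, ∀ m : ℕ, n ≤ m → Fn α m < Fn β m := by
  obtain ⟨n, hn⟩ := F_mono β hβ α hα
  refine ⟨n, fun m hm => ?_⟩
  have := hn m hm
  rw [Fn_spec, Fn_spec] at this
  exact_mod_cast this

lemma Fn_gam {β : Ordinal.{u}} (hl : Order.IsSuccLimit β) (k m : ℕ) : Fn (gam β k) m < Fn β m := by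
  have := gam_lt_F hl k m
  rw [Fn_spec, Fn_spec] at this
  exact_mod_cast this

lemma gam_club {β : Ordinal.{u}} (hβ : β < (Cardinal.aleph 1).ord) (hl : Order.IsSuccLimit β) :
    IsClubIn (Set.range (gam β)) β := by
  refine ⟨?_, ?_, ?_⟩
  · rintro x ⟨k, rfl⟩
    exact Set.mem_Iio.2 (gam_lt hl k)
  · intro α hαβ hα0 H
    have hex : ∃ k, α ≤ gam β k := (gam_cofinal hβ hl α hαβ).elim fun k hk => ⟨k, hk.le⟩
    have hspec := Nat.find_spec hex
    rcases eq_or_lt_of_le hspec with heq | hlt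
    · exact ⟨Nat.find hex, heq.symm⟩
    · exfalso
      cases hK : Nat.find hex with
      | zero =>
        obtain ⟨x, hx, hx0, hxα⟩ := H 0 (pos_iff_ne_zero.2 hα0)
        obtain ⟨j, rfl⟩ := hx
        have hle : α ≤ gam β j := by
          refine le_trans (hK ▸ hspec) ((gam_strictMono hl).monotone (Nat.zero_le j))
        exact absurd hxα (not_lt.2 hle)
      | succ K =>
        have hKm : ¬ α ≤ gam β K := Nat.find_min hex (hK ▸ Nat.lt_succ_self K)
        push_neg at hKm
        obtain ⟨x, hx, hx1, hxα⟩ := H (gam β K) hKm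
        obtain ⟨j, rfl⟩ := hx
        have hj : K < j := (gam_strictMono hl).lt_iff_lt.1 hx1
        have hle : α ≤ gam β j :=
          le_trans (hK ▸ hspec) ((gam_strictMono hl).monotone (by omega))
        exact absurd hxα (not_lt.2 hle)
  · intro δ hδ
    obtain ⟨k, hk⟩ := gam_cofinal hβ hl δ hδ
    exact ⟨gam β k, ⟨k, rfl⟩, hk⟩

end Statement1Proof

/-- There exists a strongly increasing sequence of length `ω₁` consisting
of functions from `ω` to `ω`. -/

theorem statement1 :
    ∃ f : Ordinal → ℕ → Ordinal,
      StronglyIncreasingOn f (Cardinal.aleph 1).ord ∧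
      ∀ α < (Cardinal.aleph 1).ord, ∀ m : ℕ, f α m < Ordinal.omega0 := by
  refine ⟨fun α m => ((Statement1Proof.Fn α m : ℕ) : Ordinal), ⟨?_, ?_⟩, ?_⟩
  · intro α β hαβ hβ
    obtain ⟨n, hn⟩ := Statement1Proof.Fn_mono hβ hαβ
    refine ⟨n, fun m hm => ?_⟩
    show ((Statement1Proof.Fn α m : ℕ) : Ordinal) < ((Statement1Proof.Fn β m : ℕ) : Ordinal)
    exact_mod_cast hn m hm
  · intro β hβ hl
    refine ⟨Set.range (Statement1Proof.gam β), 0,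
      Statement1Proof.gam_club hβ hl, ?_⟩
    rintro α ⟨k, rfl⟩ m _
    show ((Statement1Proof.Fn _ m : ℕ) : Ordinal) < ((Statement1Proof.Fn β m : ℕ) : Ordinal)
    exact_mod_cast Statement1Proof.Fn_gam hl k m
  · intro α _ m
    exact nat_lt_omega0 _
end

section
/- Suppose ⟨f_α : α ≤ γ⟩ is a very strongly increasing sequence of functions from ω to the ordinals. Define f_{γ+ω}(n) = f_γ(n) + n for each n ∈ ω, and for each positive k < ω define f_{γ+k}(n) = 0 if n ≤ k and f_{γ+k}(n) = f_γ(n) + k otherwise. Then the resulting sequence ⟨f_α : α ≤ γ + ω⟩ is very strongly increasing. -/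
open Ordinal Cardinal

lemma cases_le_add_omega {γ x : Ordinal} (h : x ≤ γ + Ordinal.omega0) :
    x ≤ γ ∨ (∃ k : ℕ, 0 < k ∧ x = γ + k) ∨ x = γ + Ordinal.omega0 := by
  rcases le_or_gt x γ with h1 | h1
  · exact Or.inl h1
  rcases eq_or_lt_of_le h with h2 | h2
  · exact Or.inr (Or.inr h2)
  have hx : γ + (x - γ) = x := Ordinal.add_sub_cancel_of_le h1.le
  have hlt : x - γ < Ordinal.omega0 := by
    by_contra h3
    push_neg at h3
    have : γ + Ordinal.omega0 ≤ x := by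
      calc γ + Ordinal.omega0 ≤ γ + (x - γ) := add_le_add_right h3 γ
        _ = x := hx
    exact absurd this (not_le.2 h2)
  obtain ⟨k, hk⟩ := Ordinal.lt_omega0.mp hlt
  have hk0 : 0 < k := by
    rcases Nat.eq_zero_or_pos k with h0 | h0
    · exfalso
      rw [h0] at hk
      simp only [Nat.cast_zero] at hk
      have : x ≤ γ := by rw [← hx, hk, add_zero]
      exact absurd this (not_le.2 h1)
    · exact h0
  exact Or.inr (Or.inl ⟨k, hk0, by rw [← hx, hk]⟩)

lemma not_isLimit_add_nat (γ : Ordinal) {k : ℕ} (hk : 0 < k) :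
    ¬ Order.IsSuccLimit (γ + (k : Ordinal)) := by
  intro h
  have he : γ + (k : Ordinal) = Order.succ (γ + ((k - 1 : ℕ) : Ordinal)) := by
    rw [← Ordinal.add_one_eq_succ, add_assoc]
    congr 1
    norm_cast
    omega
  have h1 : γ + ((k - 1 : ℕ) : Ordinal) < γ + (k : Ordinal) := by
    rw [he]; exact Order.lt_succ _
  have h2 := h.succ_lt h1
  rw [← he] at h2
  exact lt_irrefl _ h2

/-- Extending a very strongly increasing sequence `⟨f_α : α ≤ γ⟩` by
setting `f_{γ+ω}(n) = f_γ(n) + n` and, for positive `k < ω`, `f_{γ+k}(n) = 0` if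
`n ≤ k` and `f_γ(n) + k` otherwise, yields a very strongly increasing sequence
`⟨f_α : α ≤ γ + ω⟩`. -/
theorem statement2 (f : Ordinal → ℕ → Ordinal) (γ : Ordinal)
    (hf : VeryStronglyIncreasingOn f (γ + 1))
    (g : Ordinal → ℕ → Ordinal)
    (hg1 : ∀ α ≤ γ, g α = f α)
    (hg2 : ∀ n : ℕ, g (γ + Ordinal.omega0) n = f γ n + (n : Ordinal))
    (hg3 : ∀ k : ℕ, 0 < k → ∀ n : ℕ,
      g (γ + (k : Ordinal)) n = if n ≤ k then 0 else f γ n + (k : Ordinal)) :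
    VeryStronglyIncreasingOn g (γ + Ordinal.omega0 + 1) := by
  obtain ⟨⟨hf1, hf2⟩, hf3, hf4⟩ := hf
  have hcase : ∀ x : Ordinal, x < γ + Ordinal.omega0 + 1 →
      x ≤ γ ∨ (∃ k : ℕ, 0 < k ∧ x = γ + k) ∨ x = γ + Ordinal.omega0 := by
    intro x hx
    apply cases_le_add_omega
    rw [Ordinal.add_one_eq_succ] at hx
    exact Order.lt_succ_iff.mp hx
  have hγω : ∀ k : ℕ, 0 < k → γ + (k : Ordinal) < γ + Ordinal.omega0 := by
    intro k _
    exact add_lt_add_right (Ordinal.nat_lt_omega0 k) γ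
  have hγlt : ∀ k : ℕ, 0 < k → γ < γ + (k : Ordinal) := by
    intro k hk
    have : (0 : Ordinal) < (k : Ordinal) := by exact_mod_cast hk
    calc γ = γ + 0 := (add_zero γ).symm
      _ < γ + (k : Ordinal) := add_lt_add_right this γ
  -- part (A1) : LtStar for all pairs
  have hA1 : ∀ α β : Ordinal, α < β → β < γ + Ordinal.omega0 + 1 → LtStar (g α) (g β) := by
    intro α β hαβ hβ
    rcases hcase β hβ with hβγ | ⟨k, hk, rfl⟩ | rfl
    · -- β ≤ γ : both in old part
      have hαγ : α ≤ γ := le_of_lt (lt_of_lt_of_le hαβ hβγ)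
      rw [hg1 α hαγ, hg1 β hβγ]
      exact hf1 α β hαβ (lt_of_le_of_lt hβγ (lt_add_one γ))
    · -- β = γ + k
      have hα : α ≤ γ ∨ ∃ j : ℕ, 0 < j ∧ α = γ + j := by
        rcases cases_le_add_omega (le_of_lt (lt_of_lt_of_le hαβ (le_of_lt (hγω k hk)))) with
          h | h | h
        · exact Or.inl h
        · exact Or.inr h
        · exact absurd (h ▸ hαβ) (not_lt.2 (le_of_lt (hγω k hk)))
      rcases hα with hαγ | ⟨j, hj, rfl⟩
      · rcases lt_or_eq_of_le hαγ with hαγ' | rfl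
        · obtain ⟨n₀, hn₀⟩ := hf1 α γ hαγ' (lt_add_one γ)
          refine ⟨max n₀ (k + 1), fun m hm => ?_⟩
          rw [hg1 α hαγ, hg3 k hk m, if_neg (by omega)]
          exact lt_of_lt_of_le (hn₀ m (le_trans (le_max_left _ _) hm))
            (le_self_add)
        · refine ⟨k + 1, fun m hm => ?_⟩
          rw [hg1 α le_rfl, hg3 k hk m, if_neg (by omega)]
          have : (0 : Ordinal) < (k : Ordinal) := by exact_mod_cast hk
          calc f α m = f α m + 0 := (add_zero _).symm
            _ < f α m + (k : Ordinal) := add_lt_add_right this _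
      · -- α = γ + j, j < k
        have hjk : j < k := by
          have := (add_lt_add_iff_left γ).mp hαβ
          exact_mod_cast this
        refine ⟨k + 1, fun m hm => ?_⟩
        rw [hg3 j hj m, hg3 k hk m, if_neg (by omega), if_neg (by omega)]
        exact add_lt_add_right (by exact_mod_cast hjk) _
    · -- β = γ + ω
      rcases cases_le_add_omega (le_of_lt hαβ) with hαγ | ⟨j, hj, rfl⟩ | rfl
      · rcases lt_or_eq_of_le hαγ with hαγ' | rfl
        · obtain ⟨n₀, hn₀⟩ := hf1 α γ hαγ' (lt_add_one γ)
          refine ⟨max n₀ 1, fun m hm => ?_⟩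
          rw [hg1 α hαγ, hg2 m]
          exact lt_of_lt_of_le (hn₀ m (le_trans (le_max_left _ _) hm))
            (le_self_add)
        · refine ⟨1, fun m hm => ?_⟩
          rw [hg1 α le_rfl, hg2 m]
          have : (0 : Ordinal) < (m : Ordinal) := by exact_mod_cast hm
          calc f α m = f α m + 0 := (add_zero _).symm
            _ < f α m + (m : Ordinal) := add_lt_add_right this _
      · refine ⟨j + 1, fun m hm => ?_⟩
        rw [hg3 j hj m, hg2 m, if_neg (by omega)]
        exact add_lt_add_right (by exact_mod_cast (by omega : j < m)) _
      · exact absurd hαβ (lt_irrefl _)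
  -- the club at γ + ω
  have hclub : IsClubIn {x : Ordinal | ∃ k : ℕ, 0 < k ∧ x = γ + k} (γ + Ordinal.omega0) := by
    refine ⟨?_, ?_, ?_⟩
    · rintro x ⟨k, hk, rfl⟩
      exact hγω k hk
    · intro α hα hα0 hap
      obtain ⟨x, ⟨k, hk, rfl⟩, _, hxα⟩ := hap 0 (pos_iff_ne_zero.2 hα0)
      have hγα : γ < α := lt_trans (hγlt k hk) hxα
      rcases cases_le_add_omega (le_of_lt hα) with h | ⟨j, hj, rfl⟩ | h
      · exact absurd hγα (not_lt.2 h)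
      · exact ⟨j, hj, rfl⟩
      · exact absurd h (ne_of_lt hα)
    · intro δ hδ
      rcases cases_le_add_omega (le_of_lt hδ) with h | ⟨j, hj, rfl⟩ | h
      · exact ⟨γ + 1, ⟨1, one_pos, by norm_cast⟩, lt_of_le_of_lt h (lt_add_one γ)⟩
      · refine ⟨γ + (j + 1 : ℕ), ⟨j + 1, by omega, rfl⟩, ?_⟩
        apply add_lt_add_right
        exact_mod_cast Nat.lt_succ_self j
      · exact absurd h (ne_of_lt hδ)
  have hclubLt : ∀ α ∈ {x : Ordinal | ∃ k : ℕ, 0 < k ∧ x = γ + k},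
      LtN 1 (g α) (g (γ + Ordinal.omega0)) := by
    rintro α ⟨k, hk, rfl⟩ m hm
    rw [hg3 k hk m, hg2 m]
    by_cases hmk : m ≤ k
    · rw [if_pos hmk]
      have h1 : (0 : Ordinal) < (m : Ordinal) := by exact_mod_cast hm
      exact lt_of_lt_of_le h1 (le_add_self)
    · rw [if_neg hmk]
      exact add_lt_add_right (by exact_mod_cast (by omega : k < m)) _
  refine ⟨⟨hA1, ?_⟩, ?_, ?_⟩
  · -- A2 : clubs at limits
    intro β hβ hβlim
    rcases hcase β hβ with hβγ | ⟨k, hk, rfl⟩ | rfl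
    · obtain ⟨C, n, hC, hCf⟩ := hf2 β (lt_of_le_of_lt hβγ (lt_add_one γ)) hβlim
      refine ⟨C, n, hC, fun α hα => ?_⟩
      have hαβ : α < β := hC.1 hα
      rw [hg1 α (le_of_lt (lt_of_lt_of_le hαβ hβγ)), hg1 β hβγ]
      exact hCf α hα
    · exact absurd hβlim (not_isLimit_add_nat γ hk)
    · exact ⟨_, 1, hclub, hclubLt⟩
  · -- B : uncountable cofinality
    intro β hβ hβlim hβcof
    rcases hcase β hβ with hβγ | ⟨k, hk, rfl⟩ | rfl
    · obtain ⟨C, hC, hCf⟩ := hf3 β (lt_of_le_of_lt hβγ (lt_add_one γ)) hβlim hβcof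
      refine ⟨C, hC, fun α hα => ?_⟩
      have hαβ : α < β := hC.1 hα
      rw [hg1 α (le_of_lt (lt_of_lt_of_le hαβ hβγ)), hg1 β hβγ]
      exact hCf α hα
    · exact absurd hβlim (not_isLimit_add_nat γ hk)
    · exfalso
      have : (γ + Ordinal.omega0).cof = Cardinal.aleph0 := by
        rw [Ordinal.cof_add γ Ordinal.omega0_ne_zero,
          Ordinal.cof_omega0]
      rw [this] at hβcof
      exact lt_irrefl _ hβcof
  · -- C : condition at β + ω
    intro β hβ n
    have hβω : β + Ordinal.omega0 ≤ γ + Ordinal.omega0 := by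
      rw [Ordinal.add_one_eq_succ] at hβ
      exact Order.lt_succ_iff.mp hβ
    rcases cases_le_add_omega hβω with h | ⟨k, hk, h⟩ | h
    · -- β + ω ≤ γ : use hf4
      obtain ⟨α, hα1, hα2, hα3, hα4⟩ := hf4 β (lt_of_le_of_lt h (lt_add_one γ)) n
      have hαγ : α ≤ γ := le_of_lt (lt_of_lt_of_le hα2 h)
      refine ⟨α, hα1, hα2, ?_, ?_⟩
      · rw [hg1 α hαγ, hg1 _ h]
        exact hα3
      · rw [hg1 α hαγ]
        exact hα4
    · -- β + ω = γ + k : impossible, β + ω is a limit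
      exfalso
      exact not_isLimit_add_nat γ hk (h ▸ Ordinal.isSuccLimit_add β Ordinal.isSuccLimit_omega0)
    · -- β + ω = γ + ω
      have hβlt : β < γ + Ordinal.omega0 := by
        rw [← h]
        calc β = β + 0 := (add_zero β).symm
          _ < β + Ordinal.omega0 := add_lt_add_right Ordinal.omega0_pos β
      -- find j with β < γ + j for suitable j
      have hj : ∃ j : ℕ, β < γ + (j : Ordinal) := by
        rcases cases_le_add_omega (le_of_lt hβlt) with h1 | ⟨j, _, rfl⟩ | h1
        · exact ⟨1, lt_of_le_of_lt h1 (hγlt 1 one_pos)⟩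
        · exact ⟨j + 1, add_lt_add_right (by exact_mod_cast Nat.lt_succ_self j) γ⟩
        · exact absurd h1 (ne_of_lt hβlt)
      obtain ⟨j, hjβ⟩ := hj
      set k : ℕ := max n j + 1 with hkdef
      have hk : 0 < k := by omega
      refine ⟨γ + (k : Ordinal), ?_, ?_, ?_, ?_⟩
      · rw [Ordinal.add_one_eq_succ, Order.succ_le_iff]
        exact lt_of_lt_of_le hjβ (add_le_add_right (by exact_mod_cast (by omega : j ≤ k)) γ)
      · rw [h]
        exact hγω k hk
      · intro m hm
        rw [hg3 k hk m, h, hg2 m]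
        by_cases hmk : m ≤ k
        · rw [if_pos hmk]
          exact zero_le
        · rw [if_neg hmk]
          exact add_le_add_right (by exact_mod_cast (by omega : k ≤ m)) _
      · intro m hm
        rw [hg3 k hk m, if_pos (by omega)]
end

section
/- Suppose ⟨f_α : α < γ⟩ is a very strongly increasing sequence of functions from ω to the ordinals, where γ is a limit ordinal of countable cofinality not of the form β + ω. If f : ω → Ord satisfies f_α <* f for all α < γ, then setting f_γ = f, the sequence ⟨f_α : α ≤ γ⟩ is very strongly increasing. -/
open Ordinal Cardinal

lemma range_mem_of_closed_hyp (a : ℕ → Ordinal) (ha : StrictMono a)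
    (α : Ordinal) (hα0 : α ≠ 0)
    (H : ∀ δ < α, ∃ x ∈ Set.range a, δ < x ∧ x < α)
    (hub : ∃ i, α ≤ a i) : α ∈ Set.range a := by
  have hj : α ≤ a (Nat.find hub) := Nat.find_spec hub
  rcases eq_or_lt_of_le hj with heq | hlt
  · exact ⟨Nat.find hub, heq.symm⟩
  · exfalso
    cases h : Nat.find hub with
    | zero =>
      obtain ⟨x, ⟨i, rfl⟩, hx0, hxα⟩ := H 0 (pos_iff_ne_zero.2 hα0)
      rw [h] at hj
      exact absurd (hxα.trans_le (hj.trans (ha.monotone (Nat.zero_le i)))) (lt_irrefl _)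
    | succ k =>
      have hk : a k < α := by
        have := Nat.find_min hub (m := k) (by omega)
        exact lt_of_not_ge this
      obtain ⟨x, ⟨i, rfl⟩, h1, h2⟩ := H (a k) hk
      have hki : k < i := ha.lt_iff_lt.mp h1
      have hik : a i < a (k + 1) := h2.trans_le (h ▸ hj)
      have := ha.lt_iff_lt.mp hik
      omega

/-- If `⟨f_α : α < γ⟩` is a very strongly increasing sequence, `γ` a limit
ordinal of countable cofinality not of the form `β + ω`, and `f_α <* f` for all `α < γ`,
then appending `f` at position `γ` gives a very strongly increasing sequence
`⟨f_α : α ≤ γ⟩`. -/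
theorem statement3 (f : Ordinal → ℕ → Ordinal) (γ : Ordinal)
    (hγlim : Order.IsSuccLimit γ) (hγcof : γ.cof = Cardinal.aleph0)
    (hγform : ∀ β : Ordinal, γ ≠ β + Ordinal.omega0)
    (hf : VeryStronglyIncreasingOn f γ)
    (g : ℕ → Ordinal) (hg : ∀ α < γ, LtStar (f α) g)
    (F : Ordinal → ℕ → Ordinal)
    (hF1 : ∀ α < γ, F α = f α) (hF2 : F γ = g) :
    VeryStronglyIncreasingOn F (γ + 1) := by
  -- basic facts
  have hγ1 : ∀ β : Ordinal, β < γ + 1 ↔ β ≤ γ := by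
    intro β; rw [Ordinal.add_one_eq_succ, Order.lt_succ_iff]
  have hω : ∀ δ < γ, δ + Ordinal.omega0 < γ := by
    intro δ hδ
    have hle : δ + Ordinal.omega0 ≤ γ := by
      rw [Ordinal.add_le_iff_of_isSuccLimit Ordinal.isSuccLimit_omega0]
      intro b hb
      obtain ⟨n, rfl⟩ := Ordinal.lt_omega0.mp hb
      have : ∀ n : ℕ, δ + n < γ := by
        intro n
        induction n with
        | zero => simpa using hδ
        | succ k ih =>
          have : δ + (k + 1 : ℕ) = (δ + k) + 1 := by push_cast; rw [add_assoc]
          rw [this]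
          exact hγlim.succ_lt ih
      exact (this n).le
    exact lt_of_le_of_ne hle fun h => hγform δ h.symm
  -- a cofinal ω-sequence in γ
  obtain ⟨sfun, hsfun⟩ := Ordinal.exists_fundamental_sequence γ
  have hord : γ.cof.ord = Ordinal.omega0 := by
    rw [hγcof, Cardinal.ord_aleph0]
  have hnatlt : ∀ i : ℕ, (i : Ordinal) < γ.cof.ord := by
    intro i; rw [hord]; exact Ordinal.nat_lt_omega0 i
  set s : ℕ → Ordinal := fun i => sfun (i : Ordinal) (hnatlt i) with hsdef
  have hs1 : ∀ i, s i < γ := by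
    intro i
    have := Ordinal.lt_blsub sfun (i : Ordinal) (hnatlt i)
    rwa [hsfun.2.2] at this
  have hs2 : ∀ δ < γ, ∃ i, δ ≤ s i := by
    intro δ hδ
    have : δ < Ordinal.blsub _ sfun := by rw [hsfun.blsub_eq]; exact hδ
    obtain ⟨b, hb, hle⟩ := Ordinal.lt_blsub_iff.mp this
    obtain ⟨n, rfl⟩ := Ordinal.lt_omega0.mp (by rw [← hord]; exact hb)
    exact ⟨n, hle⟩
  -- recursive sequence B
  set B : ℕ → Ordinal := fun i =>
    Nat.rec (s 0) (fun i ih => max (ih + Ordinal.omega0) (s (i + 1))) i with hB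
  have hBγ : ∀ i, B i < γ := by
    intro i
    induction i with
    | zero => exact hs1 0
    | succ k ih => exact max_lt (hω _ ih) (hs1 (k + 1))
  have hBω : ∀ i, B i + Ordinal.omega0 < γ := fun i => hω _ (hBγ i)
  have hBsucc : ∀ i, B i + Ordinal.omega0 ≤ B (i + 1) := fun i => le_max_left _ _
  have hsB : ∀ i, s i ≤ B i := by
    intro i; cases i with
    | zero => exact le_rfl
    | succ k => exact le_max_right _ _
  -- choose n i and a i
  choose n hn using fun i => hg (B i + Ordinal.omega0) (hBω i)
  choose a ha1 ha2 ha3 ha4 using fun i => hf.2.2 (B i) (hBω i) (n i)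
  have haB : ∀ i, B i < a i := by
    intro i
    refine lt_of_lt_of_le ?_ (ha1 i)
    rw [Ordinal.add_one_eq_succ]
    exact Order.lt_succ _
  have hamono : StrictMono a := by
    apply strictMono_nat_of_lt_succ
    intro i
    calc a i < B i + Ordinal.omega0 := ha2 i
      _ ≤ B (i + 1) := hBsucc i
      _ < a (i + 1) := haB (i + 1)
  have haγ : ∀ i, a i < γ := fun i => (ha2 i).trans (hBω i)
  have haub : ∀ δ < γ, ∃ i, δ < a i := by
    intro δ hδ
    obtain ⟨i, hi⟩ := hs2 δ hδ
    exact ⟨i, lt_of_le_of_lt (hi.trans (hsB i)) (haB i)⟩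
  -- uniform bound n₀
  obtain ⟨n₀, h₀⟩ := hg 0 hγlim.pos
  have gpos : ∀ m, n₀ ≤ m → 0 < g m := fun m hm => (zero_le : (0 : Ordinal) ≤ f 0 m).trans_lt (h₀ m hm)
  have hkey : ∀ i, LtN n₀ (f (a i)) g := by
    intro i m hm
    rcases le_or_gt (n i) m with h | h
    · exact lt_of_le_of_lt (ha3 i m h) (hn i m h)
    · rw [ha4 i m h]; exact gpos m hm
  -- the club at γ
  have hclub : IsClubIn (Set.range a) γ := by
    refine ⟨?_, ?_, ?_⟩
    · rintro x ⟨i, rfl⟩; exact haγ i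
    · intro α hαγ hα0 H
      exact range_mem_of_closed_hyp a hamono α hα0 H
        (let ⟨i, hi⟩ := haub α hαγ; ⟨i, hi.le⟩)
    · intro δ hδ
      obtain ⟨i, hi⟩ := haub δ hδ
      exact ⟨a i, ⟨i, rfl⟩, hi⟩
  refine ⟨⟨?_, ?_⟩, ?_, ?_⟩
  · -- increasing
    intro α β hαβ hβ
    rcases lt_or_eq_of_le ((hγ1 β).mp hβ) with hβγ | rfl
    · rw [hF1 α (hαβ.trans hβγ), hF1 β hβγ]
      exact hf.1.1 α β hαβ hβγ
    · rw [hF1 α hαβ, hF2]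
      exact hg α hαβ
  · -- limit condition
    intro β hβ hβlim
    rcases lt_or_eq_of_le ((hγ1 β).mp hβ) with hβγ | rfl
    · obtain ⟨C, m, hC, h⟩ := hf.1.2 β hβγ hβlim
      refine ⟨C, m, hC, fun α hα => ?_⟩
      rw [hF1 α ((hC.1 hα).trans hβγ), hF1 β hβγ]
      exact h α hα
    · refine ⟨Set.range a, n₀, hclub, ?_⟩
      rintro α ⟨i, rfl⟩
      rw [hF1 (a i) (haγ i), hF2]
      exact hkey i
  · -- uncountable cofinality
    intro β hβ hβlim hβcof
    rcases lt_or_eq_of_le ((hγ1 β).mp hβ) with hβγ | rfl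
    · obtain ⟨C, hC, h⟩ := hf.2.1 β hβγ hβlim hβcof
      refine ⟨C, hC, fun α hα => ?_⟩
      rw [hF1 α ((hC.1 hα).trans hβγ), hF1 β hβγ]
      exact h α hα
    · rw [hγcof] at hβcof
      exact absurd hβcof (lt_irrefl _)
  · -- condition at β + ω
    intro β hβ m
    have hβγ : β + Ordinal.omega0 < γ :=
      lt_of_le_of_ne ((hγ1 _).mp hβ) fun h => hγform β h.symm
    obtain ⟨α, h1, h2, h3, h4⟩ := hf.2.2 β hβγ m
    refine ⟨α, h1, h2, ?_, ?_⟩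
    · rw [hF1 α (h2.trans hβγ), hF1 _ hβγ]
      exact h3
    · rw [hF1 α (h2.trans hβγ)]
      exact h4
end

section
/- If ⟨f_α : α < γ⟩ is a strongly increasing sequence of functions from ω to the ordinals, then there is a sequence ⟨f'_α : α < γ⟩ of functions from ω to the ordinals such that f_α =* f'_α for all α < γ, the sequence ⟨f'_α : α < γ⟩ is strongly increasing, and it satisfies: for each ordinal of the form β + ω < γ and each n ∈ ω there is α ∈ [β + 1, β + ω) such that f'_α ≤ₙ f'_{β+ω} and f'_α(m) = 0 for all m < n. -/
open Ordinal Cardinal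

lemma limit_mod_omega0 {β : Ordinal} (hβlim : Order.IsSuccLimit β) : β % Ordinal.omega0 = 0 := by
  by_contra h
  have hmod : β % Ordinal.omega0 < Ordinal.omega0 :=
    Ordinal.mod_lt β Ordinal.omega0_ne_zero
  obtain ⟨k, hk⟩ := Ordinal.lt_omega0.1 hmod
  cases k with
  | zero => exact h (by simpa using hk)
  | succ k =>
    have hd : β = Order.succ ((Ordinal.omega0 * (β / Ordinal.omega0)) + (k : Ordinal)) := by
      conv_lhs => rw [← Ordinal.div_add_mod β Ordinal.omega0]
      rw [hk, ← Ordinal.add_one_eq_succ, add_assoc]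
      norm_cast
    exact Order.not_isSuccLimit_succ _ (hd ▸ hβlim)

/-- Every strongly increasing sequence `⟨f_α : α < γ⟩` can be modified, mod
finite, to a strongly increasing sequence `⟨f'_α : α < γ⟩` with `f_α =* f'_α` for all
`α < γ` that in addition satisfies condition (2) of Definition 1.2. -/
theorem statement4 (f : Ordinal → ℕ → Ordinal) (γ : Ordinal)
    (hf : StronglyIncreasingOn f γ) :
    ∃ f' : Ordinal → ℕ → Ordinal,
      (∀ α < γ, EqStar (f α) (f' α)) ∧
      StronglyIncreasingOn f' γ ∧
      (∀ β : Ordinal, β + Ordinal.omega0 < γ → ∀ n : ℕ,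
        ∃ α : Ordinal, β + 1 ≤ α ∧ α < β + Ordinal.omega0 ∧
          LeN n (f' α) (f' (β + Ordinal.omega0)) ∧ ∀ m : ℕ, m < n → f' α m = 0) := by
  classical
  set f' : Ordinal → ℕ → Ordinal := fun α m =>
    if α % Ordinal.omega0 ≠ 0 ∧ (Ordinal.omega0 * (α / Ordinal.omega0)) + Ordinal.omega0 < γ ∧
        ((m : Ordinal) < α % Ordinal.omega0 ∨ f ((Ordinal.omega0 * (α / Ordinal.omega0)) + Ordinal.omega0) m ≤ f α m)
    then 0 else f α m with hf'
  have hf'le : ∀ (α : Ordinal) (m : ℕ), f' α m ≤ f α m := by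
    intro α m
    simp only [hf']
    split
    · exact zero_le
    · exact le_rfl
  -- each f' α agrees with f α eventually
  have heq : ∀ α < γ, EqStar (f α) (f' α) := by
    intro α hα
    by_cases hc : α % Ordinal.omega0 ≠ 0 ∧ (Ordinal.omega0 * (α / Ordinal.omega0)) + Ordinal.omega0 < γ
    · obtain ⟨h1, h2⟩ := hc
      have hmod : α % Ordinal.omega0 < Ordinal.omega0 :=
        Ordinal.mod_lt α Ordinal.omega0_ne_zero
      obtain ⟨k, hk⟩ := Ordinal.lt_omega0.1 hmod
      have hαlt : α < (Ordinal.omega0 * (α / Ordinal.omega0)) + Ordinal.omega0 := by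
        conv_lhs => rw [← Ordinal.div_add_mod α Ordinal.omega0]
        exact (add_lt_add_iff_left _).2 hmod
      obtain ⟨n1, hn1⟩ := hf.1 α _ hαlt h2
      refine ⟨max n1 k, fun m hm => ?_⟩
      simp only [hf']
      rw [if_neg]
      push_neg
      intro _ _
      constructor
      · rw [hk]
        exact_mod_cast le_trans (le_max_right _ _) hm
      · exact hn1 m (le_trans (le_max_left _ _) hm)
    · refine ⟨0, fun m _ => ?_⟩
      simp only [hf']
      rw [if_neg (by tauto)]
  have hf'lim : ∀ β : Ordinal, Order.IsSuccLimit β → f' β = f β := by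
    intro β hβlim
    funext m
    simp only [hf']
    rw [if_neg (by simp [limit_mod_omega0 hβlim])]
  refine ⟨f', heq, ⟨?_, ?_⟩, ?_⟩
  · intro α β hab hbγ
    obtain ⟨n0, hn0⟩ := hf.1 α β hab hbγ
    obtain ⟨n2, hn2⟩ := heq β hbγ
    refine ⟨max n0 n2, fun m hm => ?_⟩
    calc f' α m ≤ f α m := hf'le α m
      _ < f β m := hn0 m (le_trans (le_max_left _ _) hm)
      _ = f' β m := hn2 m (le_trans (le_max_right _ _) hm)
  · intro β hβγ hβlim
    obtain ⟨C, n, hC, hCn⟩ := hf.2 β hβγ hβlim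
    refine ⟨C, n, hC, fun α hα m hm => ?_⟩
    rw [hf'lim β hβlim]
    exact lt_of_le_of_lt (hf'le α m) (hCn α hα m hm)
  · intro β hβγ n
    have hmod : β % Ordinal.omega0 < Ordinal.omega0 :=
      Ordinal.mod_lt β Ordinal.omega0_ne_zero
    obtain ⟨j, hj⟩ := Ordinal.lt_omega0.1 hmod
    have hβdec : (Ordinal.omega0 * (β / Ordinal.omega0)) + (j : Ordinal) = β := by
      conv_rhs => rw [← Ordinal.div_add_mod β Ordinal.omega0]
      rw [hj]
    have hLω : (Ordinal.omega0 * (β / Ordinal.omega0)) + Ordinal.omega0 = β + Ordinal.omega0 := by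
      conv_rhs => rw [← hβdec, add_assoc, Ordinal.add_omega0 (Ordinal.nat_lt_omega0 j)]
    set k : ℕ := max (j + 1) (max n 1) with hkdef
    set α : Ordinal := (Ordinal.omega0 * (β / Ordinal.omega0)) + k with hα
    have hLα : (Ordinal.omega0 * (α / Ordinal.omega0)) = (Ordinal.omega0 * (β / Ordinal.omega0)) := by
      rw [hα, Ordinal.mul_add_div _ Ordinal.omega0_ne_zero,
        Ordinal.div_eq_zero_of_lt (Ordinal.nat_lt_omega0 k), add_zero]
    have hmodα : α % Ordinal.omega0 = k := by
      rw [hα, Ordinal.mul_add_mod_self, Ordinal.mod_eq_of_lt (Ordinal.nat_lt_omega0 k)]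
    have hk1 : 1 ≤ k := le_trans (le_max_right _ _) (le_max_right _ _)
    have hkn : n ≤ k := le_trans (le_max_left _ _) (le_max_right _ _)
    have hkne : (k : Ordinal) ≠ 0 := by
      exact_mod_cast Nat.one_le_iff_ne_zero.mp hk1
    have hαβω : α < β + Ordinal.omega0 := by
      rw [← hLω, hα]
      exact (add_lt_add_iff_left _).2 (Ordinal.nat_lt_omega0 k)
    have hlimβω : Order.IsSuccLimit (β + Ordinal.omega0) :=
      Ordinal.isSuccLimit_add β Ordinal.isSuccLimit_omega0
    refine ⟨α, ?_, hαβω, ?_, ?_⟩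
    · rw [← hβdec, hα]
      have h1 : ((j : Ordinal) + 1) ≤ (k : Ordinal) := by
        rw [← Nat.cast_one, ← Nat.cast_add]
        exact_mod_cast le_max_left _ _
      calc ((Ordinal.omega0 * (β / Ordinal.omega0)) + j) + 1 = (Ordinal.omega0 * (β / Ordinal.omega0)) + ((j:Ordinal) + 1) := by rw [add_assoc]
        _ ≤ (Ordinal.omega0 * (β / Ordinal.omega0)) + k := (add_le_add_iff_left _).2 h1
    · intro m hm
      rw [hf'lim _ hlimβω]
      by_cases hcase : (m : Ordinal) < α % Ordinal.omega0 ∨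
          f ((Ordinal.omega0 * (α / Ordinal.omega0)) + Ordinal.omega0) m ≤ f α m
      · have : f' α m = 0 := by
          simp only [hf']
          rw [if_pos ⟨by rw [hmodα]; exact hkne, by rw [hLα, hLω]; exact hβγ, hcase⟩]
        rw [this]
        exact zero_le
      · have : f' α m = f α m := by
          simp only [hf']
          rw [if_neg (by tauto)]
        rw [this]
        push_neg at hcase
        rw [← hLω, ← hLα]
        exact le_of_lt hcase.2
    · intro m hm
      simp only [hf']
      rw [if_pos]
      refine ⟨by rw [hmodα]; exact hkne, by rw [hLα, hLω]; exact hβγ, Or.inl ?_⟩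
      rw [hmodα]
      exact_mod_cast lt_of_lt_of_le hm hkn
end

section
/- Suppose μ is a singular cardinal of countable cofinality and ⟨μ_i : i < ω⟩ is an increasing sequence of regular cardinals cofinal in μ. Then there is a strongly increasing sequence ⟨g_β : β < μ⁺⟩ of functions from ω to the ordinals such that g_β(i) < μ_i for all β < μ⁺ and all i < ω. -/
open Ordinal Cardinal

universe u

private lemma exists_S (β : Ordinal.{u}) : ∃ S : Set Ordinal.{u},
    S ⊆ Set.Iio β ∧ #S ≤ Cardinal.lift.{u + 1} β.cof ∧
    (Order.IsSuccLimit β → ∀ δ < β, ∃ x ∈ S, δ < x) := by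
  by_cases h : Order.IsSuccLimit β
  · obtain ⟨ι, f, hf, hmk⟩ := Ordinal.exists_lsub_cof β
    refine ⟨Set.range f ∩ Set.Iio β, Set.inter_subset_right, ?_, fun _ δ hδ => ?_⟩
    · calc #(Set.range f ∩ Set.Iio β : Set Ordinal)
          ≤ #(Set.range f) := mk_le_mk_of_subset Set.inter_subset_left
        _ ≤ Cardinal.lift.{u + 1} #ι := by
              have h2 := mk_range_le_lift (f := f)
              rwa [Cardinal.lift_id'.{u, u + 1}] at h2
        _ = Cardinal.lift.{u + 1} β.cof := by rw [hmk]
    · have h1 : Order.succ δ < β := h.succ_lt hδ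
      rw [← hf] at h1
      obtain ⟨i, hi⟩ := Ordinal.lt_lsub_iff.1 h1
      exact ⟨f i, ⟨Set.mem_range_self i, hf ▸ Ordinal.lt_lsub f i⟩,
        (Order.lt_succ δ).trans_le hi⟩
  · exact ⟨∅, by simp, by simp, fun hl => absurd hl h⟩

noncomputable def Sset (β : Ordinal.{u}) : Set Ordinal.{u} := (exists_S β).choose

lemma Sset_subset (β : Ordinal.{u}) : Sset β ⊆ Set.Iio β := (exists_S β).choose_spec.1

lemma Sset_card (β : Ordinal.{u}) : #(Sset β) ≤ Cardinal.lift.{u + 1} β.cof :=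
  (exists_S β).choose_spec.2.1

lemma Sset_unbounded {β : Ordinal.{u}} (hβ : Order.IsSuccLimit β) :
    ∀ δ < β, ∃ x ∈ Sset β, δ < x := (exists_S β).choose_spec.2.2 hβ

def Lset (β : Ordinal.{u}) : Set Ordinal.{u} :=
  {α | α < β ∧ ∀ δ < α, ∃ x ∈ Sset β, δ < x ∧ x < α}

def clubOf (β : Ordinal.{u}) : Set Ordinal.{u} := Sset β ∪ Lset β

lemma clubOf_subset (β : Ordinal.{u}) : clubOf β ⊆ Set.Iio β := by
  intro α hα
  rcases hα with h | h
  · exact Sset_subset β h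
  · exact h.1

instance clubOf_small (β : Ordinal.{u}) : Small.{u} (clubOf β) :=
  small_subset (clubOf_subset β)

lemma Lset_card {β : Ordinal.{u}} (hβ : Order.IsSuccLimit β) : #(Lset β) ≤ #(Sset β) := by
  have hne : ∀ a : Lset β, {x | x ∈ Sset β ∧ (a : Ordinal) ≤ x}.Nonempty := by
    intro a
    obtain ⟨x, hxS, hax⟩ := Sset_unbounded hβ a a.2.1
    exact ⟨x, hxS, hax.le⟩
  set φ : Lset β → Sset β := fun a =>
    ⟨sInf {x | x ∈ Sset β ∧ (a : Ordinal) ≤ x}, (csInf_mem (hne a)).1⟩ with hφ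
  have hmono : ∀ a b : Lset β, (a : Ordinal) < b → (φ a : Ordinal) < (φ b : Ordinal) := by
    intro a b hab
    obtain ⟨x, hxS, hax, hxb⟩ := b.2.2 a hab
    have h1 : (φ a : Ordinal) ≤ x := csInf_le (OrderBot.bddBelow _) ⟨hxS, hax.le⟩
    have h2 : (b : Ordinal) ≤ (φ b : Ordinal) := le_csInf (hne b) fun y hy => hy.2
    exact h1.trans_lt (hxb.trans_le h2)
  apply mk_le_of_injective (f := φ)
  intro a b hab
  rcases lt_trichotomy (a : Ordinal) (b : Ordinal) with h | h | h
  · exact absurd (congrArg Subtype.val hab) (hmono a b h).ne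
  · exact Subtype.ext h
  · exact absurd (congrArg Subtype.val hab).symm (hmono b a h).ne

lemma clubOf_card {β : Ordinal.{u}} (hβ : Order.IsSuccLimit β) :
    #(clubOf β) ≤ Cardinal.lift.{u + 1} β.cof + Cardinal.lift.{u + 1} β.cof :=
  (mk_union_le _ _).trans (add_le_add (Sset_card β) ((Lset_card hβ).trans (Sset_card β)))

lemma clubOf_isClub {β : Ordinal.{u}} (hβ : Order.IsSuccLimit β) :
    (clubOf β ⊆ Set.Iio β) ∧
    (∀ α < β, α ≠ 0 → (∀ δ < α, ∃ x ∈ clubOf β, δ < x ∧ x < α) → α ∈ clubOf β) ∧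
    (∀ δ < β, ∃ x ∈ clubOf β, δ < x) := by
  refine ⟨clubOf_subset β, ?_, ?_⟩
  · intro α hα _ hacc
    right
    refine ⟨hα, fun δ hδ => ?_⟩
    obtain ⟨x, hx, hδx, hxα⟩ := hacc δ hδ
    rcases hx with hxS | hxL
    · exact ⟨x, hxS, hδx, hxα⟩
    · obtain ⟨s, hsS, hδs, hsx⟩ := hxL.2 δ hδx
      exact ⟨s, hsS, hδs, hsx.trans hxα⟩
  · intro δ hδ
    obtain ⟨x, hxS, h⟩ := Sset_unbounded hβ δ hδ
    exact ⟨x, Or.inl hxS, h⟩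

noncomputable def gseq (μs : ℕ → Cardinal.{u}) (β : Ordinal.{u}) : ℕ → Ordinal.{u} :=
  Ordinal.limitRecOn β (fun _ => 0) (fun _ ih i => ih i + 1)
    (fun β _ ih i =>
      if β.cof < μs i then
        (⨆ x : Shrink.{u} (clubOf β),
          ih ((equivShrink (clubOf β)).symm x).1
            (clubOf_subset β ((equivShrink (clubOf β)).symm x).2) i) + 1
      else 0)

lemma gseq_zero (μs : ℕ → Cardinal.{u}) (i : ℕ) : gseq μs 0 i = 0 := by
  simp [gseq]

lemma gseq_succ (μs : ℕ → Cardinal.{u}) (β : Ordinal.{u}) (i : ℕ) :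
    gseq μs (Order.succ β) i = gseq μs β i + 1 := by
  simp only [gseq, limitRecOn_succ]

lemma gseq_limit (μs : ℕ → Cardinal.{u}) {β : Ordinal.{u}} (hβ : Order.IsSuccLimit β) (i : ℕ) :
    gseq μs β i =
      if β.cof < μs i then
        (⨆ x : Shrink.{u} (clubOf β),
          gseq μs ((equivShrink (clubOf β)).symm x).1 i) + 1
      else 0 := by
  simp only [gseq, limitRecOn_limit _ _ _ _ hβ]

lemma shrink_clubOf_card_lt {β : Ordinal.{u}} (hβ : Order.IsSuccLimit β) {c : Cardinal.{u}}
    (hc : Cardinal.aleph0 ≤ c) (hi : β.cof < c) : #(Shrink.{u} (clubOf β)) < c := by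
  have h2 := clubOf_card hβ
  have h3 : Cardinal.lift.{u + 1} #(Shrink.{u} (clubOf β)) = #(clubOf β) :=
    Cardinal.lift_mk_shrink''.{u + 1, u} _
  have h4 : #(clubOf β) < Cardinal.lift.{u + 1} c := by
    refine h2.trans_lt ?_
    rw [← Cardinal.lift_add]
    exact Cardinal.lift_lt.2 (Cardinal.add_lt_of_lt hc hi hi)
  rw [← h3] at h4
  exact Cardinal.lift_lt.1 h4

noncomputable def clubSup (μs : ℕ → Cardinal.{u}) (β : Ordinal.{u}) (i : ℕ) : Ordinal.{u} :=
  ⨆ x : Shrink.{u} (clubOf β), gseq μs ((equivShrink (clubOf β)).symm x).1 i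

lemma gseq_limit' (μs : ℕ → Cardinal.{u}) {β : Ordinal.{u}} (hβ : Order.IsSuccLimit β) (i : ℕ) :
    gseq μs β i = if β.cof < μs i then clubSup μs β i + 1 else 0 :=
  gseq_limit μs hβ i

lemma gseq_le_clubSup (μs : ℕ → Cardinal.{u}) {β α : Ordinal.{u}} (hα : α ∈ clubOf β)
    (i : ℕ) : gseq μs α i ≤ clubSup μs β i := by
  have h := le_ciSup (Ordinal.bddAbove_range.{u, u}
      fun x : Shrink.{u} (clubOf β) => gseq μs ((equivShrink (clubOf β)).symm x).1 i)
    ((equivShrink (clubOf β)) ⟨α, hα⟩)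
  simpa [clubSup] using h

lemma clubSup_lt_ord (μs : ℕ → Cardinal.{u}) {β : Ordinal.{u}} (hβ : Order.IsSuccLimit β)
    {c : Cardinal.{u}} (hc : c.IsRegular) (hcof : β.cof < c) (i : ℕ)
    (h : ∀ α < β, gseq μs α i < c.ord) : clubSup μs β i < c.ord := by
  apply Ordinal.iSup_lt_ord
  · rw [hc.cof_eq]
    exact shrink_clubOf_card_lt hβ hc.aleph0_le hcof
  · intro x
    exact h _ (clubOf_subset β ((equivShrink (clubOf β)).symm x).2)


/-- If `μ` is a singular cardinal of countable cofinality and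
`⟨μ_i : i < ω⟩` is an increasing sequence of regular cardinals cofinal in `μ`, then
there is a strongly increasing sequence `⟨g_β : β < μ⁺⟩` of functions from `ω` to the
ordinals with `g_β(i) < μ_i` for all `β < μ⁺` and `i < ω`. -/
theorem statement5 (μ : Cardinal) (hμ : Cardinal.aleph0 < μ)
    (hcof : μ.ord.cof = Cardinal.aleph0)
    (μs : ℕ → Cardinal) (hmono : StrictMono μs)
    (hreg : ∀ i : ℕ, (μs i).IsRegular)
    (hlt : ∀ i : ℕ, μs i < μ) (hcofinal : ∀ c < μ, ∃ i : ℕ, c < μs i) :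
    ∃ g : Ordinal → ℕ → Ordinal,
      StronglyIncreasingOn g (Order.succ μ).ord ∧
      ∀ β < (Order.succ μ).ord, ∀ i : ℕ, g β i < (μs i).ord := by
  classical
  have key : ∀ β : Ordinal, β < (Order.succ μ).ord →
      (∀ i, gseq μs β i < (μs i).ord) ∧
      (∀ α < β, LtStar (gseq μs α) (gseq μs β)) ∧
      (Order.IsSuccLimit β → ∃ C : Set Ordinal, ∃ n : ℕ, IsClubIn C β ∧
        ∀ α ∈ C, LtN n (gseq μs α) (gseq μs β)) := by
    intro β
    induction β using Ordinal.induction with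
    | _ β IH =>
      intro hβO
      rcases Ordinal.zero_or_succ_or_isSuccLimit β with rfl | ⟨γ, rfl⟩ | hβ
      · refine ⟨fun i => ?_, fun α hα => absurd hα (by simp),
          fun h => absurd h Ordinal.not_isSuccLimit_zero⟩
        rw [gseq_zero]
        exact (Cardinal.isSuccLimit_ord (hreg i).aleph0_le).pos
      · have hγO : γ < (Order.succ μ).ord := (Order.lt_succ γ).trans hβO
        have hγβ : γ < Order.succ γ := Order.lt_succ γ
        have hlt1 : ∀ j, gseq μs γ j < gseq μs γ j + 1 := by
          intro j
          rw [Ordinal.add_one_eq_succ]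
          exact Order.lt_succ _
        refine ⟨fun i => ?_, fun α hα => ?_,
          fun h => absurd h (Order.not_isSuccLimit_succ γ)⟩
        · rw [gseq_succ, Ordinal.add_one_eq_succ]
          exact (Cardinal.isSuccLimit_ord (hreg i).aleph0_le).succ_lt ((IH γ hγβ hγO).1 i)
        · rcases (Order.lt_succ_iff.1 hα).eq_or_lt with rfl | hαγ
          · exact ⟨0, fun m _ => by rw [gseq_succ]; exact hlt1 m⟩
          · obtain ⟨m, hm⟩ := (IH γ hγβ hγO).2.1 α hαγ
            exact ⟨m, fun j hj => by rw [gseq_succ]; exact (hm j hj).trans (hlt1 j)⟩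
      · -- limit case
        have hcardβ : β.card ≤ μ := Order.lt_succ_iff.1 (Cardinal.lt_ord.1 hβO)
        have hcofμ : β.cof < μ := by
          rcases ((Ordinal.cof_le_card β).trans hcardβ).lt_or_eq with h | h
          · exact h
          · have hr := Cardinal.isRegular_cof hβ
            rw [h] at hr
            exact absurd (hr.2.trans hcof.le) hμ.not_ge
        obtain ⟨n, hn⟩ := hcofinal _ hcofμ
        have hcond : ∀ i, n ≤ i → β.cof < μs i := fun i hi =>
          hn.trans_le (hmono.monotone hi)
        have hlt_succ : ∀ i, clubSup μs β i < clubSup μs β i + 1 := fun i => by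
          rw [Ordinal.add_one_eq_succ]
          exact Order.lt_succ _
        have hgβ : ∀ i, n ≤ i → gseq μs β i = clubSup μs β i + 1 := by
          intro i hi
          rw [gseq_limit' μs hβ i, if_pos (hcond i hi)]
        refine ⟨fun i => ?_, fun α hα => ?_, fun _ => ?_⟩
        · rw [gseq_limit' μs hβ i]
          split_ifs with h
          · have hsup : clubSup μs β i < (μs i).ord := by
              apply clubSup_lt_ord μs hβ (hreg i) h i
              intro α hαβ
              exact (IH α hαβ (hαβ.trans hβO)).1 i
            rw [Ordinal.add_one_eq_succ]
            exact (Cardinal.isSuccLimit_ord (hreg i).aleph0_le).succ_lt hsup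
          · exact (Cardinal.isSuccLimit_ord (hreg i).aleph0_le).pos
        · obtain ⟨x, hxS, hαx⟩ := Sset_unbounded hβ α hα
          have hxβ : x < β := Sset_subset β hxS
          obtain ⟨m, hm⟩ := (IH x hxβ (hxβ.trans hβO)).2.1 α hαx
          refine ⟨max m n, fun j hj => ?_⟩
          rw [hgβ j (le_trans (le_max_right m n) hj)]
          exact ((hm j (le_trans (le_max_left m n) hj)).trans_le
            (gseq_le_clubSup μs (Or.inl hxS) j)).trans (hlt_succ j)
        · obtain ⟨h1, h2, h3⟩ := clubOf_isClub hβ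
          refine ⟨clubOf β, n, ⟨h1, h2, h3⟩, fun α hα j hj => ?_⟩
          rw [hgβ j hj]
          exact (gseq_le_clubSup μs hα j).trans_lt (hlt_succ j)
  exact ⟨gseq μs,
    ⟨fun α β hαβ hβ => (key β hβ).2.1 α hαβ, fun β hβ hlim => (key β hβ).2.2 hlim⟩,
    fun β hβ i => (key β hβ).1 i⟩
end

section
/- Suppose λ is an uncountable regular cardinal, f⃗ = ⟨f_α : α < λ⁺³⟩ is a <*-increasing sequence of functions from ω to the ordinals (λ⁺³ being the third cardinal successor of λ), and h is an exact upper bound for f⃗ such that cf(h(i)) > λ for all i < ω. Then cf(h(i)) ≥ λ⁺³ for all but finitely many i < ω. -/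
open Ordinal Cardinal

/-- If `lam` is an uncountable regular cardinal, `⟨f_α : α < lam⁺³⟩` is a
`<*`-increasing sequence of functions from `ω` to the ordinals and `h` is an exact upper
bound for it with `cf(h(i)) > lam` for all `i < ω`, then `cf(h(i)) ≥ lam⁺³` for all but
finitely many `i < ω`. -/
theorem statement9 (lam : Cardinal) (hreg : lam.IsRegular)
    (hunc : Cardinal.aleph0 < lam)
    (f : Ordinal → ℕ → Ordinal)
    (hf : ∀ α β : Ordinal, α < β →
      β < (Order.succ (Order.succ (Order.succ lam))).ord → LtStar (f α) (f β))
    (h : ℕ → Ordinal)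
    (hh : IsEUB f (Order.succ (Order.succ (Order.succ lam))).ord h)
    (hcof : ∀ i : ℕ, lam < (h i).cof) :
    ∃ n : ℕ, ∀ i : ℕ, n ≤ i → Order.succ (Order.succ (Order.succ lam)) ≤ (h i).cof := by
  by_contra hcon
  push_neg at hcon
  set K1 : Cardinal := Order.succ lam with hK1def
  set K2 : Cardinal := Order.succ K1 with hK2def
  set K : Cardinal := Order.succ K2 with hKdef
  have hal : ℵ₀ ≤ lam := hunc.le
  have halK1 : ℵ₀ ≤ K1 := hal.trans (Order.le_succ _)
  have halK2 : ℵ₀ ≤ K2 := halK1.trans (Order.le_succ _)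
  have halK : ℵ₀ ≤ K := halK2.trans (Order.le_succ _)
  have hK1reg : K1.IsRegular := Cardinal.isRegular_succ hal
  have hK2reg : K2.IsRegular := Cardinal.isRegular_succ halK1
  have hKreg : K.IsRegular := Cardinal.isRegular_succ halK2
  have hK1K2 : K1 < K2 := Order.lt_succ_iff.mpr le_rfl
  have hK2K : K2 < K := Order.lt_succ_iff.mpr le_rfl
  -- each h i is a limit ordinal
  have hlim : ∀ i, Order.IsSuccLimit (h i) := fun i =>
    Ordinal.aleph0_le_cof.mp ((hunc.trans (hcof i)).le)
  have hpos : ∀ i, (0 : Ordinal) < h i := fun i => (hlim i).pos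
  -- fundamental sequences for each h i
  have hFS := fun i => Ordinal.exists_fundamental_sequence (h i)
  choose F hF using hFS
  set c : ℕ → Ordinal → Ordinal := fun i u =>
    if hu : u < (h i).cof.ord then F i u hu else 0 with hcdef
  have hclt : ∀ i u, c i u < h i := by
    intro i u
    rw [hcdef]
    dsimp only
    split
    · rename_i hu
      have := Ordinal.lt_blsub (F i) u hu
      rwa [(hF i).2.2] at this
    · exact hpos i
  have hcval : ∀ i u (hu : u < (h i).cof.ord), c i u = F i u hu := by
    intro i u hu
    rw [hcdef]
    exact dif_pos hu
  have hcmono : ∀ i (u v : Ordinal), u ≤ v → v < (h i).cof.ord → c i u ≤ c i v := by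
    intro i u v huv hv
    rcases eq_or_lt_of_le huv with rfl | hlt
    · exact le_rfl
    · have hu : u < (h i).cof.ord := hlt.trans hv
      rw [hcval i u hu, hcval i v hv]
      exact ((hF i).2.1 hu hv hlt).le
  have hccof : ∀ i x, x < h i → ∃ u, u < (h i).cof.ord ∧ x ≤ c i u := by
    intro i x hx
    rw [← (hF i).2.2] at hx
    obtain ⟨u, hu, hle⟩ := Ordinal.lt_blsub_iff.mp hx
    exact ⟨u, hu, by rw [hcval i u hu]; exact hle⟩
  -- the functions g α, pointwise below h
  set g : Ordinal → ℕ → Ordinal := fun α i =>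
    if f α i + 1 < h i then f α i + 1 else 0 with hgdef
  have hglt : ∀ α i, g α i < h i := by
    intro α i
    rw [hgdef]
    dsimp only
    split
    · assumption
    · exact hpos i
  -- ranks
  have hrex : ∀ (α : Ordinal) (i : ℕ), ∃ u, u < (h i).cof.ord ∧ g α i ≤ c i u :=
    fun α i => hccof i _ (hglt α i)
  choose r hr1 hr2 using hrex
  -- the two sup functions
  set s : Ordinal → Ordinal := fun α => ⨆ i : ℕ, if (h i).cof = K1 then r α i else 0
    with hsdef
  set t : Ordinal → Ordinal := fun α => ⨆ i : ℕ, if (h i).cof = K2 then r α i else 0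
    with htdef
  have hordpos : ∀ (C : Cardinal), ℵ₀ ≤ C → (0 : Ordinal) < C.ord := by
    intro C hC
    rw [← Cardinal.ord_zero]
    exact Cardinal.ord_lt_ord.mpr (lt_of_lt_of_le Cardinal.aleph0_pos hC)
  have hs : ∀ α, s α < K1.ord := by
    intro α
    rw [hsdef]
    dsimp only
    apply Ordinal.iSup_lt_ord_lift
    · rw [hK1reg.cof_eq, Cardinal.mk_nat, Cardinal.lift_aleph0]
      exact hunc.trans_le (Order.le_succ _)
    · intro i
      split
      · rename_i hi
        have := hr1 α i
        rwa [hi] at this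
      · exact hordpos K1 halK1
  have ht : ∀ α, t α < K2.ord := by
    intro α
    rw [htdef]
    dsimp only
    apply Ordinal.iSup_lt_ord_lift
    · rw [hK2reg.cof_eq, Cardinal.mk_nat, Cardinal.lift_aleph0]
      exact (hunc.trans_le (Order.le_succ _)).trans hK1K2
    · intro i
      split
      · rename_i hi
        have := hr1 α i
        rwa [hi] at this
      · exact hordpos K2 halK2
  -- pigeonhole: some fiber of α ↦ (s α, t α) is unbounded in K.ord
  have hfib : ∃ s0, s0 < K1.ord ∧ ∃ t0, t0 < K2.ord ∧
      ∀ δ, δ < K.ord → ∃ α, α < K.ord ∧ δ < α ∧ s α = s0 ∧ t α = t0 := by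
    by_contra hno
    push_neg at hno
    set x : K2.ord.ToType → Ordinal := fun u => ((Ordinal.ToType.mk (o := K2.ord)).symm u).1
      with hxdef
    have hxlt : ∀ u, x u < K2.ord := fun u => ((Ordinal.ToType.mk (o := K2.ord)).symm u).2
    have hxsurj : ∀ w, w < K2.ord → ∃ u, x u = w := by
      intro w hw
      refine ⟨Ordinal.ToType.mk (o := K2.ord) ⟨w, hw⟩, ?_⟩
      rw [hxdef]
      dsimp only
      rw [OrderIso.symm_apply_apply]
    have hneg : ∀ u v : K2.ord.ToType, ∃ δ, δ < K.ord ∧ ∀ α, α < K.ord → δ < α →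
        s α = x u → t α ≠ x v := by
      intro u v
      by_cases h1 : x u < K1.ord
      · exact hno _ h1 _ (hxlt v)
      · refine ⟨0, hordpos K halK, fun α hα hδ hs' _ => h1 ?_⟩
        rw [← hs']
        exact hs α
    choose δf hδlt hδbd using hneg
    have hΔ : (⨆ p : K2.ord.ToType × K2.ord.ToType, δf p.1 p.2) < K.ord := by
      apply Ordinal.iSup_lt_ord
      · rw [hKreg.cof_eq]
        simp only [Cardinal.mk_prod, Cardinal.lift_id, Cardinal.mk_toType, Cardinal.card_ord]
        rw [Cardinal.mul_eq_self halK2]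
        exact hK2K
      · exact fun p => hδlt p.1 p.2
    set Δ := ⨆ p : K2.ord.ToType × K2.ord.ToType, δf p.1 p.2 with hΔdef
    have hΔ1 : Δ + 1 < K.ord := by
      rw [Ordinal.add_one_eq_succ]
      exact (Cardinal.isSuccLimit_ord halK).succ_lt hΔ
    have hsΔ : s (Δ + 1) < K2.ord := (hs _).trans (Cardinal.ord_lt_ord.mpr hK1K2)
    obtain ⟨u, hu⟩ := hxsurj _ hsΔ
    obtain ⟨v, hv⟩ := hxsurj _ (ht (Δ + 1))
    have hle : δf u v ≤ Δ := by
      rw [hΔdef]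
      exact Ordinal.le_iSup (fun p : K2.ord.ToType × K2.ord.ToType => δf p.1 p.2) (u, v)
    exact hδbd u v (Δ + 1) hΔ1 (hle.trans_lt (lt_add_one Δ)) hu.symm hv.symm
  obtain ⟨s0, hs0, t0, ht0, hub⟩ := hfib
  -- the dominating function d
  set d : ℕ → Ordinal := fun i =>
    if (h i).cof = K1 then c i s0 else if (h i).cof = K2 then c i t0 else 0 with hddef
  have hdlt : ∀ i, d i < h i := by
    intro i
    rw [hddef]
    dsimp only
    split
    · exact hclt i s0
    · split
      · exact hclt i t0
      · exact hpos i
  obtain ⟨β', hβ'K, n1, hn1⟩ := hh.2 d ⟨0, fun m _ => hdlt m⟩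
  obtain ⟨α0, hα0K, hβ'α0, hsα0, htα0⟩ := hub β' hβ'K
  obtain ⟨n2, hn2⟩ := hf β' α0 hβ'α0 hα0K
  obtain ⟨n3, hn3⟩ := hh.1 α0 hα0K
  obtain ⟨i, hiN, hiB⟩ := hcon (max n1 (max n2 n3))
  have hν1 : K1 ≤ (h i).cof := Order.succ_le_of_lt (hcof i)
  have hν2 : (h i).cof ≤ K2 := Order.lt_succ_iff.mp hiB
  have e1 : d i < f β' i := hn1 i (le_trans (le_max_left _ _) hiN)
  have e2 : f β' i < f α0 i :=
    hn2 i (le_trans (le_trans (le_max_left _ _) (le_max_right _ _)) hiN)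
  have e3 : f α0 i < h i :=
    hn3 i (le_trans (le_trans (le_max_right _ _) (le_max_right _ _)) hiN)
  have e4 : g α0 i = f α0 i + 1 := by
    rw [hgdef]
    dsimp only
    rw [if_pos]
    rw [Ordinal.add_one_eq_succ]
    exact (hlim i).succ_lt e3
  have e5 : g α0 i ≤ c i (r α0 i) := hr2 α0 i
  -- in both cases we derive d i < d i
  have hcontra : d i < d i := by
    rcases eq_or_lt_of_le hν2 with hcase2 | hlt2
    · -- cof = K2
      have hcase1 : (h i).cof ≠ K1 := by
        rw [hcase2]
        exact hK1K2.ne'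
      have hdi : d i = c i t0 := by
        rw [hddef]
        dsimp only
        rw [if_neg hcase1, if_pos hcase2]
      have hri : r α0 i ≤ t0 := by
        rw [← htα0]
        have h1 : (if (h i).cof = K2 then r α0 i else 0) ≤ t α0 :=
          Ordinal.le_iSup (fun j : ℕ => if (h j).cof = K2 then r α0 j else 0) i
        rwa [if_pos hcase2] at h1
      have ht0dom : t0 < (h i).cof.ord := by
        rw [hcase2]
        exact ht0
      calc d i < f β' i := e1
        _ < f α0 i := e2
        _ < g α0 i := by rw [e4]; exact lt_add_one _
        _ ≤ c i (r α0 i) := e5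
        _ ≤ c i t0 := hcmono i _ _ hri ht0dom
        _ = d i := hdi.symm
    · -- cof = K1
      have hcase1 : (h i).cof = K1 := le_antisymm (Order.lt_succ_iff.mp hlt2) hν1
      have hdi : d i = c i s0 := by
        rw [hddef]
        dsimp only
        rw [if_pos hcase1]
      have hri : r α0 i ≤ s0 := by
        rw [← hsα0]
        have h1 : (if (h i).cof = K1 then r α0 i else 0) ≤ s α0 :=
          Ordinal.le_iSup (fun j : ℕ => if (h j).cof = K1 then r α0 j else 0) i
        rwa [if_pos hcase1] at h1
      have hs0dom : s0 < (h i).cof.ord := by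
        rw [hcase1]
        exact hs0
      calc d i < f β' i := e1
        _ < f α0 i := e2
        _ < g α0 i := by rw [e4]; exact lt_add_one _
        _ ≤ c i (r α0 i) := e5
        _ ≤ c i s0 := hcmono i _ _ hri hs0dom
        _ = d i := hdi.symm
  exact absurd hcontra (lt_irrefl _)
end

section
/- Suppose F = ⟨f_α : α < γ⟩ is a very strongly increasing sequence of functions from ω to ω, where γ is a limit ordinal of cofinality ω₁. Then the following are equivalent: (1) there exists a very strongly increasing sequence of successor length extending F; (2) there exists a function f : ω → ω such that the set {α < γ : f_α <₀ f} contains a club subset of γ. -/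
open Ordinal Cardinal

/-- If `F = ⟨f_α : α < γ⟩` is a very strongly increasing sequence of
functions from `ω` to `ω`, where `γ` is a limit ordinal of cofinality `ω₁`, then `F`
extends to a very strongly increasing sequence of successor length (consisting of
functions from `ω` to `ω`) if and only if there is `f : ω → ω` such that
`{α < γ : f_α <₀ f}` contains a club subset of `γ`. -/
theorem statement13 (F : Ordinal → ℕ → Ordinal) (γ : Ordinal) (hlim : Order.IsSuccLimit γ)
    (hcof : γ.cof = Cardinal.aleph 1)
    (hF : VeryStronglyIncreasingOn F γ)
    (hFomega : ∀ α < γ, ∀ m : ℕ, F α m < Ordinal.omega0) :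
    (∃ δ : Ordinal, ∃ G : Ordinal → ℕ → Ordinal, γ ≤ δ + 1 ∧
        VeryStronglyIncreasingOn G (δ + 1) ∧
        (∀ α < γ, G α = F α) ∧
        (∀ α < δ + 1, ∀ m : ℕ, G α m < Ordinal.omega0)) ↔
      (∃ f : ℕ → Ordinal, (∀ m : ℕ, f m < Ordinal.omega0) ∧
        ∃ C : Set Ordinal, IsClubIn C γ ∧ ∀ α ∈ C, LtN 0 (F α) f) := by
  have hsucc : γ < γ + 1 := by
    rw [Ordinal.add_one_eq_succ]; exact Order.lt_succ γ
  have hcofpos : Cardinal.aleph0 < γ.cof := by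
    rw [hcof]; exact Cardinal.aleph0_lt_aleph_one
  constructor
  · rintro ⟨δ, G, hγδ, hG, hagree, hfin⟩
    have hγlt : γ < δ + 1 := by
      rcases lt_or_eq_of_le hγδ with h | h
      · exact h
      · exfalso
        have : δ < γ := by rw [h, Ordinal.add_one_eq_succ]; exact Order.lt_succ δ
        have := hlim.succ_lt this
        rw [← Ordinal.add_one_eq_succ, ← h] at this
        exact lt_irrefl _ this
    obtain ⟨C, hC, hCf⟩ := hG.2.1 γ hγlt hlim hcofpos
    refine ⟨G γ, fun m => hfin γ hγlt m, C, hC, fun α hα => ?_⟩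
    have hαγ : α < γ := hC.1 hα
    have := hCf α hα
    rwa [hagree α hαγ] at this
  · rintro ⟨f, hf, C, hC, hCf⟩
    refine ⟨γ, fun α => if α < γ then F α else f, le_of_lt hsucc, ?_, ?_, ?_⟩
    · have hGeq : ∀ α < γ, (fun α => if α < γ then F α else f) α = F α := by
        intro α hα; simp [hα]
      have hGγ : (fun α => if α < γ then F α else f) γ = f := by
        simp
      have hle : ∀ β, β < γ + 1 → β = γ ∨ β < γ := by
        intro β hβ
        rw [Ordinal.add_one_eq_succ, Order.lt_succ_iff] at hβ
        rcases eq_or_lt_of_le hβ with h | h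
        · exact Or.inl h
        · exact Or.inr h
      refine ⟨⟨?_, ?_⟩, ?_, ?_⟩
      · intro α β hαβ hβ
        rcases hle β hβ with heq | hβγ
        · -- β = γ : show LtStar (F α) f
          subst heq
          obtain ⟨x, hxC, hαx⟩ := hC.2.2 α hαβ
          have hxγ := hC.1 hxC
          obtain ⟨n, hn⟩ := hF.1.1 α x hαx hxγ
          rw [hGeq α hαβ, hGγ]
          exact ⟨n, fun m hm => lt_trans (hn m hm) (hCf x hxC m (Nat.zero_le m))⟩
        · rw [hGeq α (lt_trans hαβ hβγ), hGeq β hβγ]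
          exact hF.1.1 α β hαβ hβγ
      · intro β hβ hβlim
        rcases hle β hβ with rfl | hβγ
        · refine ⟨C, 0, hC, fun α hα => ?_⟩
          rw [hGeq α (hC.1 hα), hGγ]
          exact hCf α hα
        · obtain ⟨D, n, hD, hDf⟩ := hF.1.2 β hβγ hβlim
          refine ⟨D, n, hD, fun α hα => ?_⟩
          rw [hGeq α (lt_trans (hD.1 hα) hβγ), hGeq β hβγ]
          exact hDf α hα
      · intro β hβ hβlim hβcof
        rcases hle β hβ with rfl | hβγ
        · refine ⟨C, hC, fun α hα => ?_⟩
          rw [hGeq α (hC.1 hα), hGγ]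
          exact hCf α hα
        · obtain ⟨D, hD, hDf⟩ := hF.2.1 β hβγ hβlim hβcof
          refine ⟨D, hD, fun α hα => ?_⟩
          rw [hGeq α (lt_trans (hD.1 hα) hβγ), hGeq β hβγ]
          exact hDf α hα
      · intro β hβ n
        rcases hle (β + Ordinal.omega0) hβ with heq | hβγ
        · exfalso
          have h1 : (β + Ordinal.omega0).cof = Cardinal.aleph0 := by
            rw [Ordinal.cof_add β Ordinal.omega0_ne_zero,
              Ordinal.cof_omega0]
          rw [heq, hcof] at h1
          exact absurd h1.symm (ne_of_lt Cardinal.aleph0_lt_aleph_one)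
        · obtain ⟨α, h1, h2, h3, h4⟩ := hF.2.2 β hβγ n
          refine ⟨α, h1, h2, ?_, ?_⟩
          · rw [hGeq α (lt_trans h2 hβγ), hGeq _ hβγ]
            exact h3
          · intro m hm
            rw [hGeq α (lt_trans h2 hβγ)]
            exact h4 m hm
    · intro α hα; simp [hα]
    · intro α hα m
      by_cases h : α < γ
      · simp only [h, if_true]; exact hFomega α h m
      · simp only [h, if_false]; exact hf m
end
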